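/- Let D ≥ 1 and let h_{αβ} be a smooth symmetric tensor field on ℝ^D (h_{αβ} = h_{βα}) whose linearized Riemann tensor vanishes identically: ∂_μ∂_α h_{νβ} − ∂_ν∂_α h_{μβ} − ∂_μ∂_β h_{να} + ∂_ν∂_β h_{μα} = 0 on ℝ^D for all μ, ν, α, β. Then there exists a smooth field ξ_α on ℝ^D such that h_{αβ} = ∂_α ξ_β + ∂_β ξ_α for all α, β. -/

import Mathlib

/-- The partial derivative `∂_μ f` of a function `f : ℝ^D → ℝ`. -/
noncomputable def pd {D : ℕ} (μ : Fin D) (f : (Fin D → ℝ) → ℝ) : (Fin D → ℝ) → ℝ :=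
  fun x => fderiv ℝ f x (Pi.single μ 1)

/-- The linearized Riemann tensor of a rank-2 tensor field `h` on `ℝ^D`:
`R[h]_{μναβ} = ∂_μ∂_α h_{νβ} − ∂_ν∂_α h_{μβ} − ∂_μ∂_β h_{να} + ∂_ν∂_β h_{μα}`. -/
noncomputable def linRiemann {D : ℕ} (h : Fin D → Fin D → (Fin D → ℝ) → ℝ)
    (μ ν α β : Fin D) : (Fin D → ℝ) → ℝ := fun x =>
  pd μ (pd α (h ν β)) x - pd ν (pd α (h μ β)) x
    - pd μ (pd β (h ν α)) x + pd ν (pd β (h μ α)) x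

open scoped ContDiff

variable {D : ℕ}


lemma fderiv_expand {f : (Fin D → ℝ) → ℝ} {y : Fin D → ℝ} (hf : DifferentiableAt ℝ f y)
    (w : Fin D → ℝ) : fderiv ℝ f y w = ∑ α, w α * pd α f y := by
  have hw : w = ∑ α, w α • (Pi.single α 1 : Fin D → ℝ) := by
    funext j
    rw [Finset.sum_apply]
    simp [Pi.single_apply]
  conv_lhs => rw [hw]
  rw [map_sum]
  simp [pd]

lemma poincare1 (v : Fin D → (Fin D → ℝ) → ℝ) (hv : ∀ γ, ContDiff ℝ (⊤ : ℕ∞) (v γ))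
    (hsymm : ∀ α β x, pd α (v β) x = pd β (v α) x) :
    ∃ g, ContDiff ℝ (⊤ : ℕ∞) g ∧ ∀ α x, pd α g x = v α x := by
  classical
  have hvd : ∀ γ, Differentiable ℝ (v γ) := fun γ => (hv γ).differentiable (by decide)
  set Φ : (Fin D → ℝ) → ℝ → ℝ := fun x t => ∑ γ, x γ * v γ (t • x) with hΦ
  set G : (Fin D → ℝ) → ℝ := fun x => ∫ t in (0:ℝ)..1, Φ x t with hG
  set L : (Fin D → ℝ) → (Fin D → ℝ) →L[ℝ] ℝ :=
    fun x => ∑ γ, v γ x • ContinuousLinearMap.proj γ with hL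
  set F' : (Fin D → ℝ) → ℝ → ((Fin D → ℝ) →L[ℝ] ℝ) := fun x t =>
    ∑ γ, (x γ • ((fderiv ℝ (v γ) (t • x)).comp
        (t • ContinuousLinearMap.id ℝ (Fin D → ℝ)))
      + v γ (t • x) • (ContinuousLinearMap.proj γ : (Fin D → ℝ) →L[ℝ] ℝ)) with hF'
  -- joint continuity/smoothness facts
  have hvcont : ∀ γ, Continuous (v γ) := fun γ => (hv γ).continuous
  have hfdcont : ∀ γ, Continuous (fderiv ℝ (v γ)) := fun γ => (hv γ).continuous_fderiv (by decide)
  have hΦcont : Continuous (fun p : (Fin D → ℝ) × ℝ => Φ p.1 p.2) := by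
    apply continuous_finset_sum
    intro γ _
    exact ((continuous_apply γ).comp continuous_fst).mul
      ((hvcont γ).comp (continuous_snd.smul continuous_fst))
  have hF'cont : Continuous (fun p : (Fin D → ℝ) × ℝ => F' p.1 p.2) := by
    apply continuous_finset_sum
    intro γ _
    apply Continuous.add
    · exact ((continuous_apply γ).comp continuous_fst).smul
        (Continuous.clm_comp ((hfdcont γ).comp (continuous_snd.smul continuous_fst))
          (continuous_snd.smul continuous_const))
    · exact ((hvcont γ).comp (continuous_snd.smul continuous_fst)).smul continuous_const
  -- pointwise differentiability in x
  have hΦdiff : ∀ (t : ℝ) (x : Fin D → ℝ), HasFDerivAt (fun y => Φ y t) (F' x t) x := by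
    intro t x
    apply HasFDerivAt.fun_sum
    intro γ _
    have hA : HasFDerivAt (fun y : Fin D → ℝ => y γ)
        (ContinuousLinearMap.proj γ : (Fin D → ℝ) →L[ℝ] ℝ) x := by
      exact (ContinuousLinearMap.proj γ : (Fin D → ℝ) →L[ℝ] ℝ).hasFDerivAt (x := x)
    have hlin : HasFDerivAt (fun y : Fin D → ℝ => t • y)
        (t • ContinuousLinearMap.id ℝ (Fin D → ℝ)) x := by
      simpa using (t • ContinuousLinearMap.id ℝ (Fin D → ℝ)).hasFDerivAt (x := x)
    have hB : HasFDerivAt (fun y : Fin D → ℝ => v γ (t • y))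
        ((fderiv ℝ (v γ) (t • x)).comp (t • ContinuousLinearMap.id ℝ (Fin D → ℝ))) x :=
      ((hvd γ (t • x)).hasFDerivAt).comp x hlin
    simpa [add_comm] using hA.fun_mul hB
  -- the key derivative computation
  have key : ∀ x₀ : Fin D → ℝ, HasFDerivAt G (L x₀) x₀ := by
    intro x₀
    obtain ⟨C, hC⟩ : ∃ C, ∀ p ∈ (Metric.closedBall x₀ 1 ×ˢ Set.uIcc (0:ℝ) 1),
        ‖(fun p : (Fin D → ℝ) × ℝ => F' p.1 p.2) p‖ ≤ C :=
      ((isCompact_closedBall x₀ 1).prod isCompact_uIcc).exists_bound_of_continuousOn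
        hF'cont.continuousOn
    have hFint : IntervalIntegrable (fun t => F' x₀ t) MeasureTheory.volume 0 1 :=
      (hF'cont.comp (Continuous.prodMk_right x₀)).intervalIntegrable 0 1
    have main := intervalIntegral.hasFDerivAt_integral_of_dominated_of_fderiv_le
      (𝕜 := ℝ) (μ := MeasureTheory.volume) (F := Φ) (F' := F') (x₀ := x₀)
      (a := 0) (b := 1) (bound := fun _ => C) (Metric.ball_mem_nhds x₀ zero_lt_one)
      (Filter.Eventually.of_forall fun x =>
        ((hΦcont.comp (Continuous.prodMk_right x)).aestronglyMeasurable))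
      ((hΦcont.comp (Continuous.prodMk_right x₀)).intervalIntegrable 0 1)
      ((hF'cont.comp (Continuous.prodMk_right x₀)).aestronglyMeasurable)
      (MeasureTheory.ae_of_all _ (fun t ht x hx =>
        hC (x, t) ⟨Metric.ball_subset_closedBall hx, Set.uIoc_subset_uIcc ht⟩))
      intervalIntegrable_const
      (MeasureTheory.ae_of_all _ (fun t _ x _ => hΦdiff t x))
    -- identify the integral with L x₀
    have hint : (∫ t in (0:ℝ)..1, F' x₀ t) = L x₀ := by
      apply ContinuousLinearMap.ext
      intro w
      rw [ContinuousLinearMap.intervalIntegral_apply hFint w]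
      -- ψ t = t * ∑ γ, w γ * v γ (t • x₀)
      have hψ : ∀ t : ℝ, HasDerivAt (fun s : ℝ => s * ∑ γ, w γ * v γ (s • x₀))
          ((F' x₀ t) w) t := by
        intro t
        have hc : HasDerivAt (fun s : ℝ => ∑ γ, w γ * v γ (s • x₀))
            (∑ γ, w γ * fderiv ℝ (v γ) (t • x₀) x₀) t := by
          apply HasDerivAt.fun_sum
          intro γ _
          exact (HasDerivAt.const_mul (w γ)
            (((hvd γ (t • x₀)).hasFDerivAt).comp_hasDerivAt t
              (by simpa using (hasDerivAt_id t).smul_const x₀)))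
        have := (hasDerivAt_id t).fun_mul hc
        refine this.congr_deriv (Eq.symm ?_)
        simp only [hF', ContinuousLinearMap.sum_apply, ContinuousLinearMap.add_apply,
          ContinuousLinearMap.smul_apply, ContinuousLinearMap.coe_comp', Function.comp_apply,
          ContinuousLinearMap.coe_smul', Pi.smul_apply, ContinuousLinearMap.coe_id', id_eq,
          ContinuousLinearMap.proj_apply, smul_eq_mul, id_eq, mul_one, one_mul]
        rw [Finset.sum_add_distrib]
        have e1 : ∑ γ, x₀ γ * (fderiv ℝ (v γ) (t • x₀)) (t • w)
            = t * ∑ γ, w γ * (fderiv ℝ (v γ) (t • x₀)) x₀ := by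
          have expand : ∀ γ, (fderiv ℝ (v γ) (t • x₀)) w = ∑ α, w α * pd α (v γ) (t • x₀) :=
            fun γ => fderiv_expand (hvd γ _) w
          have expand' : ∀ γ, (fderiv ℝ (v γ) (t • x₀)) x₀ = ∑ α, x₀ α * pd α (v γ) (t • x₀) :=
            fun γ => fderiv_expand (hvd γ _) x₀
          simp only [map_smul, smul_eq_mul, expand, expand', Finset.mul_sum]
          rw [Finset.sum_comm]
          apply Finset.sum_congr rfl; intro γ _
          apply Finset.sum_congr rfl; intro α _
          rw [hsymm]
          ring
        rw [e1]
        have h2 : ∑ γ : Fin D, v γ (t • x₀) * w γ = ∑ γ : Fin D, w γ * v γ (t • x₀) :=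
          Finset.sum_congr rfl fun γ _ => mul_comm _ _
        rw [h2]
        ring
      have hψcont : Continuous fun t => (F' x₀ t) w :=
        (isBoundedBilinearMap_apply.continuous.comp
          (((hF'cont.comp (Continuous.prodMk_right x₀))).prodMk continuous_const))
      rw [intervalIntegral.integral_eq_sub_of_hasDerivAt
        (fun t _ => hψ t) (hψcont.intervalIntegrable 0 1)]
      simp [hL, ContinuousLinearMap.sum_apply, mul_comm]
    rw [hint] at main
    exact main
  -- conclude
  have hLsmooth : ContDiff ℝ (⊤ : ℕ∞) L := by
    apply ContDiff.sum
    intro γ _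
    exact (hv γ).smul contDiff_const
  have hGdiff : Differentiable ℝ G := fun x => (key x).differentiableAt
  have hfderiv : fderiv ℝ G = L := funext fun x => (key x).fderiv
  refine ⟨G, ?_, ?_⟩
  · rw [show ((⊤ : ℕ∞) : WithTop ℕ∞) = ∞ from rfl, contDiff_infty_iff_fderiv]
    exact ⟨hGdiff, hfderiv ▸ hLsmooth⟩
  · intro α x
    simp only [pd, hfderiv, hL, ContinuousLinearMap.sum_apply, ContinuousLinearMap.smul_apply,
      ContinuousLinearMap.proj_apply, smul_eq_mul]
    rw [Finset.sum_eq_single α]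
    · simp
    · intro b _ hb; simp [Pi.single_apply, hb]
    · simp



lemma pd_contDiff {f : (Fin D → ℝ) → ℝ} (hf : ContDiff ℝ (⊤ : ℕ∞) f) (μ : Fin D) :
    ContDiff ℝ (⊤ : ℕ∞) (pd μ f) := by
  have : ContDiff ℝ (⊤ : ℕ∞) (fderiv ℝ f) := hf.fderiv_right (by exact_mod_cast le_top)
  exact this.clm_apply contDiff_const

lemma pd_add {f g : (Fin D → ℝ) → ℝ} (hf : Differentiable ℝ f) (hg : Differentiable ℝ g)
    (μ : Fin D) : pd μ (fun x => f x + g x) = fun x => pd μ f x + pd μ g x := by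
  funext x
  simp [pd, fderiv_fun_add (hf x) (hg x)]

lemma pd_sub {f g : (Fin D → ℝ) → ℝ} (hf : Differentiable ℝ f) (hg : Differentiable ℝ g)
    (μ : Fin D) : pd μ (fun x => f x - g x) = fun x => pd μ f x - pd μ g x := by
  funext x
  simp [pd, fderiv_fun_sub (hf x) (hg x)]

lemma pd_comm {f : (Fin D → ℝ) → ℝ} (hf : ContDiff ℝ (⊤ : ℕ∞) f) (μ ν : Fin D) (x : Fin D → ℝ) :
    pd μ (pd ν f) x = pd ν (pd μ f) x := by
  have hd : ContDiff ℝ (⊤ : ℕ∞) (fderiv ℝ f) := hf.fderiv_right (by exact_mod_cast le_top)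
  have key : ∀ v w : Fin D → ℝ,
      fderiv ℝ (fun y => fderiv ℝ f y w) x v = fderiv ℝ (fderiv ℝ f) x v w := by
    intro v w
    rw [fderiv_clm_apply (hd.differentiable (by simp) x)
      (differentiableAt_const w)]
    simp
  have symm : IsSymmSndFDerivAt ℝ f x :=
    hf.contDiffAt.isSymmSndFDerivAt (by simp; exact WithTop.coe_le_coe.2 le_top)
  show fderiv ℝ (fun y => fderiv ℝ f y (Pi.single ν 1)) x (Pi.single μ 1)
      = fderiv ℝ (fun y => fderiv ℝ f y (Pi.single μ 1)) x (Pi.single ν 1)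
  rw [key, key, symm.eq]


lemma pd_mul_const {f : (Fin D → ℝ) → ℝ} (hf : Differentiable ℝ f) (c : ℝ)
    (μ : Fin D) : pd μ (fun x => f x * c) = fun x => pd μ f x * c := by
  funext x
  show (fderiv ℝ (fun x => f x * c) x) (Pi.single μ 1) = (fderiv ℝ f x) (Pi.single μ 1) * c
  rw [fderiv_mul_const (hf x)]
  simp [mul_comm]

/-- A smooth symmetric tensor field `h_{αβ}` on `ℝ^D` whose linearized Riemann
tensor vanishes identically is pure gauge: `h_{αβ} = ∂_α ξ_β + ∂_β ξ_α`. -/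
theorem spin_two_zero_curvature_is_pure_gauge (D : ℕ) (hD : 1 ≤ D)
    (h : Fin D → Fin D → (Fin D → ℝ) → ℝ)
    (hsmooth : ∀ α β, ContDiff ℝ (⊤ : ℕ∞) (h α β))
    (hsym : ∀ α β, h α β = h β α)
    (hflat : ∀ μ ν α β x, linRiemann h μ ν α β x = 0) :
    ∃ ξ : Fin D → (Fin D → ℝ) → ℝ, (∀ α, ContDiff ℝ (⊤ : ℕ∞) (ξ α)) ∧
      ∀ α β x, h α β x = pd α (ξ β) x + pd β (ξ α) x := by
  classical
  have hd : ∀ α β, Differentiable ℝ (h α β) := fun α β => (hsmooth α β).differentiable (by decide)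
  have hpdd : ∀ (f : (Fin D → ℝ) → ℝ), ContDiff ℝ (⊤ : ℕ∞) f → ∀ μ, Differentiable ℝ (pd μ f) :=
    fun f hf μ => (pd_contDiff hf μ).differentiable (by decide)
  -- Step 1: the antisymmetric potential m with ∂_γ m_{μν} = ∂_μ h_{νγ} - ∂_ν h_{μγ}
  have hKsmooth : ∀ μ ν γ : Fin D,
      ContDiff ℝ (⊤ : ℕ∞) (fun x => pd μ (h ν γ) x - pd ν (h μ γ) x) :=
    fun μ ν γ => (pd_contDiff (hsmooth ν γ) μ).sub (pd_contDiff (hsmooth μ γ) ν)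
  have hKclosed : ∀ μ ν α β x,
      pd α (fun x => pd μ (h ν β) x - pd ν (h μ β) x) x
        = pd β (fun x => pd μ (h ν α) x - pd ν (h μ α) x) x := by
    intro μ ν α β x
    have e1 : pd α (fun x => pd μ (h ν β) x - pd ν (h μ β) x)
        = fun x => pd α (pd μ (h ν β)) x - pd α (pd ν (h μ β)) x :=
      pd_sub (hpdd _ (hsmooth ν β) μ) (hpdd _ (hsmooth μ β) ν) α
    have e2 : pd β (fun x => pd μ (h ν α) x - pd ν (h μ α) x)
        = fun x => pd β (pd μ (h ν α)) x - pd β (pd ν (h μ α)) x :=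
      pd_sub (hpdd _ (hsmooth ν α) μ) (hpdd _ (hsmooth μ α) ν) β
    simp only [e1, e2]
    have R := hflat μ ν α β x
    simp only [linRiemann] at R
    rw [pd_comm (hsmooth ν β) α μ, pd_comm (hsmooth μ β) α ν,
      pd_comm (hsmooth ν α) β μ, pd_comm (hsmooth μ α) β ν]
    linarith
  have hpot : ∀ μ ν, ∃ gg, ContDiff ℝ (⊤ : ℕ∞) gg ∧
      ∀ γ x, pd γ gg x = pd μ (h ν γ) x - pd ν (h μ γ) x :=
    fun μ ν => poincare1 (fun γ x => pd μ (h ν γ) x - pd ν (h μ γ) x)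
      (hKsmooth μ ν) (fun α β x => hKclosed μ ν α β x)
  choose g hgs hgpd using hpot
  -- antisymmetrization
  have hmsmooth : ∀ μ ν : Fin D, ContDiff ℝ (⊤ : ℕ∞) (fun x => (g μ ν x - g ν μ x) * 2⁻¹) :=
    fun μ ν => ((hgs μ ν).sub (hgs ν μ)).mul contDiff_const
  have hmd : ∀ μ ν : Fin D, Differentiable ℝ (fun x => (g μ ν x - g ν μ x) * 2⁻¹) :=
    fun μ ν => (hmsmooth μ ν).differentiable (by decide)
  have hmpd : ∀ μ ν γ x, pd γ (fun x => (g μ ν x - g ν μ x) * 2⁻¹) x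
      = pd μ (h ν γ) x - pd ν (h μ γ) x := by
    intro μ ν γ x
    have e0 : pd γ (fun x => g μ ν x - g ν μ x)
        = fun x => pd γ (g μ ν) x - pd γ (g ν μ) x :=
      pd_sub ((hgs μ ν).differentiable (by decide)) ((hgs ν μ).differentiable (by decide)) γ
    have e1 : pd γ (fun x => (g μ ν x - g ν μ x) * 2⁻¹)
        = fun x => pd γ (fun x => g μ ν x - g ν μ x) x * 2⁻¹ :=
      pd_mul_const (((hgs μ ν).sub (hgs ν μ)).differentiable (by decide)) 2⁻¹ γ
    simp only [e1, e0, hgpd]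
    ring
  -- Step 2: the vector potential ξ
  have hξpot : ∀ β : Fin D, ∃ gg, ContDiff ℝ (⊤ : ℕ∞) gg ∧
      ∀ μ x, pd μ gg x = (h μ β x + (g μ β x - g β μ x) * 2⁻¹) * 2⁻¹ := by
    intro β
    apply poincare1 (fun μ x => (h μ β x + (g μ β x - g β μ x) * 2⁻¹) * 2⁻¹)
      (fun μ => ((hsmooth μ β).add (hmsmooth μ β)).mul contDiff_const)
    intro α μ x
    have e : ∀ γ μ' : Fin D,
        pd γ (fun x => (h μ' β x + (g μ' β x - g β μ' x) * 2⁻¹) * 2⁻¹)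
        = fun x => (pd γ (h μ' β) x
            + pd γ (fun x => (g μ' β x - g β μ' x) * 2⁻¹) x) * 2⁻¹ := by
      intro γ μ'
      rw [pd_mul_const (((hsmooth μ' β).add (hmsmooth μ' β)).differentiable (by decide)) 2⁻¹ γ,
        pd_add (hd μ' β) (hmd μ' β) γ]
    simp only [e, hmpd]
    have s1 := congrFun (congrArg (pd μ) (hsym β α)) x
    have s2 := congrFun (congrArg (pd α) (hsym β μ)) x
    have s3 := congrFun (congrArg (pd β) (hsym μ α)) x
    ring_nf
    linarith
  choose ξ hξs hξpd using hξpot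
  refine ⟨ξ, hξs, ?_⟩
  intro α β x
  rw [hξpd β α x, hξpd α β x,
    show h β α x = h α β x from congrFun (hsym β α) x]
  ring
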